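/- For all a, b > 0 with a ≠ b, the value [log Q(a,b) - log M(a,b)] / [log Q(a,b) - log H(a,b)] lies strictly between 0 and 2/9. -/

import Mathlib

lemma pos_of_deriv_pos {f f' : ℝ → ℝ} (hd : ∀ x, HasDerivAt f (f' x) x)
    (h0 : f 0 = 0) (hp : ∀ x, 0 < x → 0 < f' x) : ∀ x, 0 < x → 0 < f x := by
  intro x hx
  have hmono : StrictMonoOn f (Set.Ici 0) := by
    apply strictMonoOn_of_deriv_pos (convex_Ici 0)
    · exact (Differentiable.continuous fun y => (hd y).differentiableAt).continuousOn
    · intro y hy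
      rw [interior_Ici] at hy
      rw [(hd y).deriv]
      exact hp y hy
  have := hmono Set.self_mem_Ici (Set.mem_Ici.2 hx.le) hx
  rwa [h0] at this

lemma hd_aux (u : ℝ) :
    HasDerivAt (fun u => Real.sinh (2*u)) (Real.cosh (2*u) * 2) u ∧
    HasDerivAt (fun u => Real.cosh (2*u)) (Real.sinh (2*u) * 2) u := by
  have h2u : HasDerivAt (fun u : ℝ => 2*u) 2 u := by
    simpa using (hasDerivAt_id u).const_mul 2
  exact ⟨(Real.hasDerivAt_sinh (2*u)).comp u h2u, (Real.hasDerivAt_cosh (2*u)).comp u h2u⟩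

lemma sinh_lt_mul_cosh {u : ℝ} (hu : 0 < u) : Real.sinh u < u * Real.cosh u := by
  have hd : ∀ x : ℝ, HasDerivAt (fun x => x * Real.cosh x - Real.sinh x)
      (x * Real.sinh x) x := by
    intro x
    have H := ((hasDerivAt_id x).mul (Real.hasDerivAt_cosh x)).sub (Real.hasDerivAt_sinh x)
    exact H.congr_deriv (by simp only [id_eq]; ring)
  have := pos_of_deriv_pos hd (by simp) (fun x hx => by
    have := Real.sinh_pos_iff.2 hx; nlinarith) u hu
  linarith

lemma h2_pos {u : ℝ} (hu : 0 < u) :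
    0 < 4*Real.sinh (2*u) + (4*u)*Real.cosh (2*u) - 5*Real.sinh u - (7*u)*Real.cosh u := by
  have hd : ∀ x : ℝ, HasDerivAt
      (fun u => 4*Real.sinh (2*u) + (4*u)*Real.cosh (2*u) - 5*Real.sinh u - (7*u)*Real.cosh u)
      (12*Real.cosh (2*x) + 8*x*Real.sinh (2*x) - 12*Real.cosh x - 7*x*Real.sinh x) x := by
    intro x
    obtain ⟨hs2, hc2⟩ := hd_aux x
    have h4u : HasDerivAt (fun u : ℝ => 4*u) 4 x := by
      simpa using (hasDerivAt_id x).const_mul 4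
    have h7u : HasDerivAt (fun u : ℝ => 7*u) 7 x := by
      simpa using (hasDerivAt_id x).const_mul 7
    have H := (((hs2.const_mul 4).add (h4u.mul hc2)).sub
        ((Real.hasDerivAt_sinh x).const_mul 5)).sub (h7u.mul (Real.hasDerivAt_cosh x))
    exact H.congr_deriv (by ring)
  refine pos_of_deriv_pos hd (by simp) (fun x hx => ?_) u hu
  have hcc : Real.cosh x < Real.cosh (2*x) := by
    rw [Real.cosh_lt_cosh]
    rw [abs_of_pos hx, abs_of_pos (by linarith)]
    linarith
  have hss : Real.sinh x < Real.sinh (2*x) := Real.sinh_lt_sinh.2 (by linarith)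
  have hsp : 0 < Real.sinh x := Real.sinh_pos_iff.2 hx
  nlinarith

lemma h1_pos {u : ℝ} (hu : 0 < u) :
    0 < 2*Real.cosh u + Real.cosh (2*u) + (2*u)*Real.sinh (2*u) - (7*u)*Real.sinh u - 3 := by
  have hd : ∀ x : ℝ, HasDerivAt
      (fun u => 2*Real.cosh u + Real.cosh (2*u) + (2*u)*Real.sinh (2*u) - (7*u)*Real.sinh u - 3)
      (4*Real.sinh (2*x) + (4*x)*Real.cosh (2*x) - 5*Real.sinh x - (7*x)*Real.cosh x) x := by
    intro x
    obtain ⟨hs2, hc2⟩ := hd_aux x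
    have h2u : HasDerivAt (fun u : ℝ => 2*u) 2 x := by
      simpa using (hasDerivAt_id x).const_mul 2
    have h7u : HasDerivAt (fun u : ℝ => 7*u) 7 x := by
      simpa using (hasDerivAt_id x).const_mul 7
    have H := (((((Real.hasDerivAt_cosh x).const_mul 2).add hc2).add
        (h2u.mul hs2)).sub (h7u.mul (Real.hasDerivAt_sinh x))).sub (hasDerivAt_const x 3)
    exact H.congr_deriv (by ring)
  refine pos_of_deriv_pos hd (by norm_num) (fun x hx => h2_pos hx) u hu

lemma h0_pos {u : ℝ} (hu : 0 < u) :
    0 < 9*Real.sinh u - (7*u)*Real.cosh u - 3*u + u*Real.cosh (2*u) := by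
  have hd : ∀ x : ℝ, HasDerivAt
      (fun u => 9*Real.sinh u - (7*u)*Real.cosh u - 3*u + u*Real.cosh (2*u))
      (2*Real.cosh x + Real.cosh (2*x) + (2*x)*Real.sinh (2*x) - (7*x)*Real.sinh x - 3) x := by
    intro x
    obtain ⟨hs2, hc2⟩ := hd_aux x
    have h7u : HasDerivAt (fun u : ℝ => 7*u) 7 x := by
      simpa using (hasDerivAt_id x).const_mul 7
    have h3u : HasDerivAt (fun u : ℝ => 3*u) 3 x := by
      simpa using (hasDerivAt_id x).const_mul 3
    have H := ((((Real.hasDerivAt_sinh x).const_mul 9).sub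
        (h7u.mul (Real.hasDerivAt_cosh x))).sub h3u).add ((hasDerivAt_id x).mul hc2)
    exact H.congr_deriv (by simp only [id_eq]; ring)
  refine pos_of_deriv_pos hd (by simp) (fun x hx => h1_pos hx) u hu

lemma key {u : ℝ} (hu : 0 < u) :
    7*u*Real.cosh u + u*(4 - 2*Real.cosh u^2) < 9*Real.sinh u := by
  have h0 := h0_pos hu
  have hc2 : Real.cosh (2*u) = 2*Real.cosh u^2 - 1 := by
    rw [Real.cosh_two_mul]
    have := Real.cosh_sq u
    linarith
  rw [hc2] at h0
  nlinarith

noncomputable def M (a b : ℝ) : ℝ := (a - b) / (2 * Real.arsinh ((a - b) / (a + b)))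
noncomputable def H (a b : ℝ) : ℝ := 2 * a * b / (a + b)
noncomputable def Q (a b : ℝ) : ℝ := Real.sqrt ((a ^ 2 + b ^ 2) / 2)

set_option maxHeartbeats 2000000 in
lemma main (a b : ℝ) (hb : 0 < b) (hba : b < a) :
    0 < (Real.log (Q a b) - Real.log (M a b)) / (Real.log (Q a b) - Real.log (H a b)) ∧
    (Real.log (Q a b) - Real.log (M a b)) / (Real.log (Q a b) - Real.log (H a b)) < 2 / 9 := by
  have ha : 0 < a := hb.trans hba
  have hs : 0 < a + b := by linarith
  set t : ℝ := (a - b) / (a + b) with ht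
  have ht0 : 0 < t := div_pos (by linarith) hs
  have ht1 : t < 1 := by rw [ht, div_lt_one hs]; linarith
  have h1t : 0 < 1 - t^2 := by nlinarith
  set u : ℝ := Real.arsinh t with hudef
  have hu : 0 < u := Real.arsinh_pos_iff.2 ht0
  have hsu : Real.sinh u = t := Real.sinh_arsinh t
  set c : ℝ := Real.cosh u with hcdef
  have hc0 : 0 < c := Real.cosh_pos u
  have hc1 : 1 < c := by
    rw [hcdef, show (1:ℝ) = Real.cosh 0 from (Real.cosh_zero).symm, Real.cosh_lt_cosh]
    simpa using hu.ne'
  have hc2 : c^2 = t^2 + 1 := by rw [hcdef, Real.cosh_sq, hsu]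
  have hcd : 2 - c^2 = 1 - t^2 := by linarith
  have habt : a - b = t * (a + b) := by rw [ht]; field_simp
  -- expressions for the means
  have hM : M a b = (a+b)/2 * (t/u) := by
    unfold M
    rw [← ht, ← hudef, habt]
    field_simp
  have hH : H a b = (a+b)/2 * (1 - t^2) := by
    unfold H
    rw [ht]
    field_simp
    ring
  have hQ : Q a b = (a+b)/2 * c := by
    unfold Q
    have h2 : ((a+b)/2 * c)^2 = (a^2 + b^2)/2 := by
      rw [mul_pow, hc2, ht]
      field_simp
      ring
    rw [← h2, Real.sqrt_sq (by positivity)]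
  -- logs
  have hs2 : (0:ℝ) < (a+b)/2 := by linarith
  have hlogM : Real.log (M a b) = Real.log ((a+b)/2) + (Real.log t - Real.log u) := by
    rw [hM, Real.log_mul hs2.ne' (by positivity), Real.log_div ht0.ne' hu.ne']
  have hlogH : Real.log (H a b) = Real.log ((a+b)/2) + Real.log (1 - t^2) := by
    rw [hH, Real.log_mul hs2.ne' h1t.ne']
  have hlogQ : Real.log (Q a b) = Real.log ((a+b)/2) + Real.log c := by
    rw [hQ, Real.log_mul hs2.ne' hc0.ne']
  have hN : Real.log (Q a b) - Real.log (M a b)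
      = Real.log c - (Real.log t - Real.log u) := by rw [hlogQ, hlogM]; ring
  have hD : Real.log (Q a b) - Real.log (H a b)
      = Real.log c - Real.log (1 - t^2) := by rw [hlogQ, hlogH]; ring
  -- numerator positive
  have htu : t < u * c := by
    have := sinh_lt_mul_cosh hu
    rwa [hsu, ← hcdef] at this
  have hNpos : 0 < Real.log c - (Real.log t - Real.log u) := by
    have h1 : Real.log t < Real.log (u * c) := Real.log_lt_log ht0 htu
    rw [Real.log_mul hu.ne' hc0.ne'] at h1
    linarith
  -- denominator positive
  have hDpos : 0 < Real.log c - Real.log (1 - t^2) := by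
    have h1 : Real.log (1 - t^2) < 0 := Real.log_neg h1t (by nlinarith)
    have h2 : 0 < Real.log c := Real.log_pos hc1
    linarith
  -- the key upper bound
  have hA : (7/9)*c + (2/9)*(2 - c^2) < t/u := by
    have hk := key hu
    rw [hsu, ← hcdef] at hk
    rw [lt_div_iff₀ hu]
    nlinarith
  have hgm : c ^ ((7:ℝ)/9) * (2 - c^2) ^ ((2:ℝ)/9) ≤ (7/9)*c + (2/9)*(2 - c^2) :=
    Real.geom_mean_le_arith_mean2_weighted (by norm_num) (by norm_num) hc0.le
      (by linarith) (by norm_num)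
  have hgmpos : 0 < c ^ ((7:ℝ)/9) * (2 - c^2) ^ ((2:ℝ)/9) := by
    have h2c : 0 < 2 - c^2 := by linarith
    positivity
  have hlog9 : (7/9)*Real.log c + (2/9)*Real.log (1 - t^2) < Real.log t - Real.log u := by
    have h2c : 0 < 2 - c^2 := by linarith
    have h2 := Real.log_lt_log hgmpos (lt_of_le_of_lt hgm hA)
    rw [Real.log_mul (by positivity) (by positivity), Real.log_rpow hc0,
      Real.log_rpow h2c, Real.log_div ht0.ne' hu.ne', hcd] at h2
    linarith
  rw [hN, hD]
  refine ⟨div_pos hNpos hDpos, ?_⟩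
  rw [div_lt_div_iff₀ hDpos (by norm_num : (0:ℝ) < 9)]
  linarith

theorem stmt19 (a b : ℝ) (ha : 0 < a) (hb : 0 < b) (hab : a ≠ b) :
    0 < (Real.log (Q a b) - Real.log (M a b)) / (Real.log (Q a b) - Real.log (H a b)) ∧
    (Real.log (Q a b) - Real.log (M a b)) / (Real.log (Q a b) - Real.log (H a b)) < 2 / 9 := by
  rcases lt_trichotomy a b with h | h | h
  · have hM : M a b = M b a := by
      unfold M
      rw [show (a - b)/(a + b) = -((b - a)/(b + a)) by ring, Real.arsinh_neg,
        show a - b = -(b - a) by ring, mul_neg, neg_div_neg_eq]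
    have hH : H a b = H b a := by unfold H; ring_nf
    have hQ : Q a b = Q b a := by unfold Q; ring_nf
    rw [hM, hH, hQ]
    exact main b a ha h
  · exact absurd h hab
  · exact main a b hb h
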